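/- For every finite set A, the trace κ_A(1_A) of the identity automaton 1_A is the Turing automaton of empty sort with a single state and empty transition relation (in particular, it has no transition from the anchor * to itself). Consequently, κ_A(1_A) = κ_B(1_B) for all finite sets A and B. -/
import Mathlib


/-- The transition relation of a Turing automaton of sort `X`: a relation
`δ ⊆ (Q × X_*)²`, where `X_* = X ⊕ {*}` is modeled as `Option X`, with `none` the anchor. -/
def TRel (Q X : Type*) : Type _ := (Q × Option X) → (Q × Option X) → Prop

/-- Relational composition (product of the semiring of binary relations on `Q`). -/
def rcomp {Q : Type*} (r s : Q → Q → Prop) : Q → Q → Prop := fun a c => ∃ b, r a b ∧ s b c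

/-- Union of relations (sum of the semiring of binary relations on `Q`). -/
def runion {Q : Type*} (r s : Q → Q → Prop) : Q → Q → Prop := fun a b => r a b ∨ s a b

/-- 2×2 matrices of binary relations on `Q`. -/
def Mat2 (Q : Type*) : Type _ := Fin 2 → Fin 2 → (Q → Q → Prop)

/-- The transposition of indices used to interchange the two rows of a matrix. -/
def swap2 : Fin 2 → Fin 2 := fun i => if i = 0 then 1 else 0

/-- Alternating matrix product `M ⊙ N := M · (σN)`, where `σN` interchanges the rows of `N`. -/
def altMul {Q : Type*} (M N : Mat2 Q) : Mat2 Q :=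
  fun i j => runion (rcomp (M i 0) (N (swap2 0) j)) (rcomp (M i 1) (N (swap2 1) j))

/-- `U⁰ := σI₂`: identity relations off the diagonal, empty relations on the diagonal. -/
def altOne {Q : Type*} : Mat2 Q := fun i j => if i = j then (fun _ _ => False) else Eq

/-- Alternating matrix powers: `U⁰ = σI₂`, `U^(n+1) = Uⁿ ⊙ U`. -/
def altPow {Q : Type*} (U : Mat2 Q) : ℕ → Mat2 Q
  | 0 => altOne
  | n + 1 => altMul (altPow U n) U

/-- Alternating product of a row vector with a matrix: `u ⊙ M := u · (σM)`. -/
def altRowMul {Q : Type*} (u : Fin 2 → Q → Q → Prop) (M : Mat2 Q) : Fin 2 → Q → Q → Prop :=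
  fun j => runion (rcomp (u 0) (M (swap2 0) j)) (rcomp (u 1) (M (swap2 1) j))

/-- Alternating product of a row vector with a column vector: `u ⊙ v := u · (σv)`. -/
def altRowCol {Q : Type*} (u v : Fin 2 → Q → Q → Prop) : Q → Q → Prop :=
  runion (rcomp (u 0) (v (swap2 0))) (rcomp (u 1) (v (swap2 1)))

/-- A family `λ_{x,y}` of binary relations on `Q` indexed by pairs of interfaces. -/
def LamFamily (Q X : Type*) : Type _ := Option X → Option X → (Q → Q → Prop)

/-- The base case of the Kleene elimination: `λ^∅_{x,y} = {(q,r) | ((q,x),(r,y)) ∈ δ}`. -/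
def lamInit {Q A B : Type*} (δ : TRel Q (A ⊕ A ⊕ B)) : LamFamily Q (A ⊕ A ⊕ B) :=
  fun x y q r => δ (q, x) (r, y)

/-- One Kleene elimination step at `z ∈ A`:
`λ^(C∪{z})_{x,y} := λ^C_{x,y} ∪ ⋃_{n≥0} u ⊙ Uⁿ ⊙ v` with
`u = (λ^C_{x,⟨z,1⟩}, λ^C_{x,⟨z,2⟩})`, `v = (λ^C_{⟨z,1⟩,y}; λ^C_{⟨z,2⟩,y})` and
`U = (λ^C_{⟨z,i⟩,⟨z,j⟩})_{i,j}`. -/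
def elimStep {Q A B : Type*} (lam : LamFamily Q (A ⊕ A ⊕ B)) (z : A) :
    LamFamily Q (A ⊕ A ⊕ B) :=
  fun x y =>
    let p : Fin 2 → Option (A ⊕ A ⊕ B) := ![some (Sum.inl z), some (Sum.inr (Sum.inl z))]
    let u : Fin 2 → Q → Q → Prop := fun i => lam x (p i)
    let U : Mat2 Q := fun i j => lam (p i) (p j)
    let v : Fin 2 → Q → Q → Prop := fun i => lam (p i) y
    runion (lam x y) (fun q r => ∃ n, altRowCol (altRowMul u (altPow U n)) v q r)

/-- Kleene elimination along a list of elements of `A`. -/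
def lamList {Q A B : Type*} (δ : TRel Q (A ⊕ A ⊕ B)) : List A → LamFamily Q (A ⊕ A ⊕ B)
  | [] => lamInit δ
  | z :: L => elimStep (lamList δ L) z

/-- The trace `κ_A T` of a Turing automaton of sort `A ⊕ A ⊕ B` (`A` finite): its
transitions are `((q,b),(r,b'))` iff `(q,r) ∈ λ^A_{b,b'}`. -/
def kappa {Q A B : Type*} [Fintype A] (δ : TRel Q (A ⊕ A ⊕ B)) : TRel Q B :=
  fun a b =>
    lamList δ Finset.univ.toList (a.2.map (fun x => Sum.inr (Sum.inr x)))
      (b.2.map (fun x => Sum.inr (Sum.inr x))) a.1 b.1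

/-- The relabeling `T · ρ` of a Turing automaton along a bijection `ρ : X ≃ Y`:
`((q, ρ_* x),(r, ρ_* y))` is a transition iff `((q,x),(r,y))` is, where `ρ_*(*) = *`. -/
def relabel {Q X Y : Type*} (ρ : X ≃ Y) (δ : TRel Q X) : TRel Q Y :=
  fun a b => δ (a.1, a.2.map ρ.symm) (b.1, b.2.map ρ.symm)

/-- The sum `T ⊕ T'` of Turing automata of sorts `X` and `Y`: states `Q × Q'`, and a
transition happens in one component while the other state stays put; anchors identified. -/
def autSum {Q Q' X Y : Type*} (δ : TRel Q X) (δ' : TRel Q' Y) : TRel (Q × Q') (X ⊕ Y) :=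
  fun a b =>
    (∃ u v : Option X, a.2 = u.map Sum.inl ∧ b.2 = v.map Sum.inl ∧
      a.1.2 = b.1.2 ∧ δ (a.1.1, u) (b.1.1, v)) ∨
    (∃ u v : Option Y, a.2 = u.map Sum.inr ∧ b.2 = v.map Sum.inr ∧
      a.1.1 = b.1.1 ∧ δ' (a.1.2, u) (b.1.2, v))

/-- The identity Turing automaton `1_A` of sort `A ⊕ A`: a single state, with transitions
from `⟨a,1⟩` to `⟨a,2⟩` and back for every `a ∈ A`. -/
def idAut (A : Type*) : TRel PUnit (A ⊕ A) :=
  fun a b =>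
    (∃ x : A, a.2 = some (Sum.inl x) ∧ b.2 = some (Sum.inr x)) ∨
    (∃ x : A, a.2 = some (Sum.inr x) ∧ b.2 = some (Sum.inl x))

/-- The permutation `c_{A,B⊕B} ⊗ 1_C` rearranging `(A ⊕ B) ⊕ (B ⊕ C)` into
`B ⊕ B ⊕ (A ⊕ C)`, used to define the derived composition. -/
def compPerm (A B C : Type*) : (A ⊕ B) ⊕ (B ⊕ C) ≃ B ⊕ B ⊕ (A ⊕ C) where
  toFun x := match x with
    | .inl (.inl a) => .inr (.inr (.inl a))
    | .inl (.inr b) => .inl b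
    | .inr (.inl b) => .inr (.inl b)
    | .inr (.inr c) => .inr (.inr (.inr c))
  invFun y := match y with
    | .inl b => .inl (.inr b)
    | .inr (.inl b) => .inr (.inl b)
    | .inr (.inr (.inl a)) => .inl (.inl a)
    | .inr (.inr (.inr c)) => .inr (.inr c)
  left_inv x := by rcases x with (a | b) | (b | c) <;> rfl
  right_inv y := by rcases y with b | (b | (a | c)) <;> rfl

/-- The derived composition `T ∘ T' := κ_B((T ⊕ T') · (c_{A,B⊕B} ⊗ 1_C))` of Turing
automata of sorts `A ⊕ B` and `B ⊕ C` (`B` finite). -/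
def compAut {Q Q' A B C : Type*} [Fintype B]
    (δ : TRel Q (A ⊕ B)) (δ' : TRel Q' (B ⊕ C)) : TRel (Q × Q') (A ⊕ C) :=
  kappa (relabel (compPerm A B C) (autSum δ δ'))

/-- The canonical bijection `A ⊕ A ≃ A ⊕ A ⊕ Empty` padding the sort with the empty sort. -/
def padEmpty (A : Type*) : A ⊕ A ≃ A ⊕ A ⊕ (Empty : Type) where
  toFun x := match x with
    | .inl a => .inl a
    | .inr a => .inr (.inl a)
  invFun y := match y with
    | .inl a => .inl a
    | .inr (.inl a) => .inr a
    | .inr (.inr e) => e.elim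
  left_inv x := by rcases x with a | a <;> rfl
  right_inv y := by rcases y with a | (a | e) <;> first | rfl | exact e.elim

section Aux

variable {A : Type*}

/-- The characterization of all intermediate `λ` families for the identity automaton. -/
def matched (x y : Option (A ⊕ A ⊕ (Empty : Type))) : Prop :=
  (∃ z : A, x = some (Sum.inl z) ∧ y = some (Sum.inr (Sum.inl z))) ∨
  (∃ z : A, x = some (Sum.inr (Sum.inl z)) ∧ y = some (Sum.inl z))

lemma swap2_zero : swap2 0 = 1 := rfl
lemma swap2_one : swap2 1 = 0 := rfl

lemma altPow_diag {Q : Type*} (U : Mat2 Q) (h0 : ∀ q r, ¬ U 0 0 q r)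
    (h1 : ∀ q r, ¬ U 1 1 q r) :
    ∀ n, (∀ q r, ¬ altPow U n 0 0 q r) ∧ (∀ q r, ¬ altPow U n 1 1 q r) := by
  intro n
  induction n with
  | zero => constructor <;> intro q r h <;> simp [altPow, altOne] at h
  | succ n ih =>
    constructor <;> intro q r h <;>
      rcases h with ⟨b, hb1, hb2⟩ | ⟨b, hb1, hb2⟩
    · exact ih.1 q b hb1
    · rw [swap2_one] at hb2; exact h0 b r hb2
    · rw [swap2_zero] at hb2; exact h1 b r hb2
    · exact ih.2 q b hb1

lemma lamInit_id (x y : Option (A ⊕ A ⊕ (Empty : Type))) (q r : PUnit) :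
    lamInit (relabel (padEmpty A) (idAut A)) x y q r ↔ matched x y := by
  simp only [lamInit, relabel, idAut, matched]
  constructor
  · rintro (⟨z, hx, hy⟩ | ⟨z, hx, hy⟩)
    · left; refine ⟨z, ?_, ?_⟩ <;>
        [rcases x with _ | (a | a | e); rcases y with _ | (a | a | e)] <;>
        first | exact e.elim | simp_all [padEmpty]
    · right; refine ⟨z, ?_, ?_⟩ <;>
        [rcases x with _ | (a | a | e); rcases y with _ | (a | a | e)] <;>
        first | exact e.elim | simp_all [padEmpty]
  · rintro (⟨z, hx, hy⟩ | ⟨z, hx, hy⟩) <;> subst hx <;> subst hy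
    · exact Or.inl ⟨z, rfl, rfl⟩
    · exact Or.inr ⟨z, rfl, rfl⟩

lemma matched_self_false (x : Option (A ⊕ A ⊕ (Empty : Type))) : ¬ matched x x := by
  rintro (⟨z, hx, hy⟩ | ⟨z, hx, hy⟩) <;> rw [hx] at hy <;> simp at hy

lemma elimStep_def {Q A B : Type*} (lam : LamFamily Q (A ⊕ A ⊕ B)) (z : A)
    (x y : Option (A ⊕ A ⊕ B)) :
    elimStep lam z x y = runion (lam x y)
      (fun q r => ∃ n, altRowCol (altRowMul
        (fun i => lam x (![some (Sum.inl z), some (Sum.inr (Sum.inl z))] i))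
        (altPow (fun i j => lam (![some (Sum.inl z), some (Sum.inr (Sum.inl z))] i)
          (![some (Sum.inl z), some (Sum.inr (Sum.inl z))] j)) n))
        (fun i => lam (![some (Sum.inl z), some (Sum.inr (Sum.inl z))] i) y) q r) := rfl

lemma lamList_id [Fintype A] (L : List A) (x y : Option (A ⊕ A ⊕ (Empty : Type)))
    (q r : PUnit) :
    lamList (relabel (padEmpty A) (idAut A)) L x y q r ↔ matched x y := by
  induction L generalizing x y q r with
  | nil => exact lamInit_id x y q r
  | cons z L ih =>
    show elimStep (lamList (relabel (padEmpty A) (idAut A)) L) z x y q r ↔ _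
    rw [elimStep_def]
    constructor
    · rintro (h | ⟨n, h⟩)
      · exact (ih x y q r).mp h
      · set p : Fin 2 → Option (A ⊕ A ⊕ (Empty : Type)) :=
          ![some (Sum.inl z), some (Sum.inr (Sum.inl z))] with hp
        have hp0 : p 0 = some (Sum.inl z) := rfl
        have hp1 : p 1 = some (Sum.inr (Sum.inl z)) := rfl
        have hdiag := altPow_diag (Q := PUnit)
          (fun i j => lamList (relabel (padEmpty A) (idAut A)) L (p i) (p j))
          (fun q r h => matched_self_false _ ((ih _ _ q r).mp h))
          (fun q r h => matched_self_false _ ((ih _ _ q r).mp h)) n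
        rcases h with ⟨b, hw, hv⟩ | ⟨b, hw, hv⟩
        · rw [swap2_zero] at hv
          rcases hw with ⟨c, hu, hM⟩ | ⟨c, hu, hM⟩
          · -- u 0 : x → p 0, v 1 : p 1 → y
            have hx := (ih x (p 0) q c).mp hu
            have hy := (ih (p 1) y b r).mp hv
            rcases hx with ⟨w, hx1, hx2⟩ | ⟨w, hx1, hx2⟩ <;>
              rcases hy with ⟨w', hy1, hy2⟩ | ⟨w', hy1, hy2⟩ <;>
              simp_all [matched, hp0, hp1]
          · rw [swap2_one] at hM; exact absurd hM (hdiag.1 c b)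
        · rw [swap2_one] at hv
          rcases hw with ⟨c, hu, hM⟩ | ⟨c, hu, hM⟩
          · rw [swap2_zero] at hM; exact absurd hM (hdiag.2 c b)
          · have hx := (ih x (p 1) q c).mp hu
            have hy := (ih (p 0) y b r).mp hv
            rcases hx with ⟨w, hx1, hx2⟩ | ⟨w, hx1, hx2⟩ <;>
              rcases hy with ⟨w', hy1, hy2⟩ | ⟨w', hy1, hy2⟩ <;>
              simp_all [matched, hp0, hp1]
    · intro h; exact Or.inl ((ih x y q r).mpr h)

lemma kappa_id_empty [Fintype A] :
    ∀ x y, ¬ kappa (relabel (padEmpty A) (idAut A)) x y := by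
  rintro ⟨q, xo⟩ ⟨r, yo⟩ h
  cases xo with
  | none =>
    cases yo with
    | none =>
      have := (lamList_id (A := A) Finset.univ.toList none none q r).mp h
      rcases this with ⟨z, hz, _⟩ | ⟨z, hz, _⟩ <;> simp at hz
    | some e => exact e.elim
  | some e => exact e.elim

end Aux

/-- The trace `κ_A(1_A)` of the identity automaton is the Turing automaton of empty sort
with a single state and empty transition relation (in particular with no transition from
the anchor to itself); consequently `κ_A(1_A) = κ_B(1_B)` for all finite sets `A`, `B`. -/
theorem trace_of_identity {A B : Type*} [Fintype A] [Fintype B] :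
    (∀ x y, ¬ kappa (relabel (padEmpty A) (idAut A)) x y) ∧
    kappa (relabel (padEmpty A) (idAut A)) = kappa (relabel (padEmpty B) (idAut B)) := by
  refine ⟨kappa_id_empty, ?_⟩
  funext x y
  simp only [eq_iff_iff]
  exact ⟨fun h => absurd h (kappa_id_empty x y), fun h => absurd h (kappa_id_empty x y)⟩
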